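/- Zeckendorf's theorem: every positive integer n can be written uniquely as a sum of pairwise non-consecutive Fibonacci numbers F_{k₁} + F_{k₂} + ⋯ + F_{k_r} with k₁ > k₂ + 1 > ⋯, using Fibonacci indices k_i ≥ 2. -/

import Mathlib

open List Nat

private instance : IsTrans ℕ fun a b ↦ b + 2 ≤ a where
  trans _a _b _c hba hcb := hcb.trans <| le_self_add.trans hba

lemma isZeckRep_iff (l : List ℕ) :
    l.IsZeckendorfRep ↔ l.Chain' (fun a b => b + 2 ≤ a) ∧ (∀ k ∈ l, 2 ≤ k) := by
  constructor
  · intro h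
    have hp : (l ++ [0]).Pairwise (fun a b => b + 2 ≤ a) := isChain_iff_pairwise.1 h
    rw [pairwise_append] at hp
    exact ⟨isChain_iff_pairwise.2 hp.1, fun k hk => by simpa using hp.2.2 k hk 0 (by simp)⟩
  · rintro ⟨hc, h2⟩
    rw [List.IsZeckendorfRep, isChain_append]
    refine ⟨hc, isChain_singleton _, fun x hx y hy => ?_⟩
    simp only [head?_cons, Option.mem_some_iff] at hy
    subst hy
    simpa using h2 x (List.mem_of_mem_getLast? hx)

/-- Zeckendorf's theorem: every positive integer is uniquely the sum of pairwise
non-consecutive Fibonacci numbers `F_{k₁} + ⋯ + F_{k_r}` with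
`k₁ > k₂ + 1 > ⋯` (indices decreasing, each gap at least 2) and all indices `≥ 2`. -/
theorem zeckendorf (n : ℕ) (hn : 0 < n) :
    ∃! l : List ℕ,
      l.Chain' (fun a b => b + 2 ≤ a) ∧ (∀ k ∈ l, 2 ≤ k) ∧
      (l.map Nat.fib).sum = n := by
  refine ⟨n.zeckendorf, ?_, ?_⟩
  · have h := (isZeckRep_iff _).1 (Nat.isZeckendorfRep_zeckendorf n)
    exact ⟨h.1, h.2, Nat.sum_zeckendorf_fib n⟩
  · rintro l ⟨hc, h2, hs⟩
    have := Nat.zeckendorf_sum_fib ((isZeckRep_iff l).2 ⟨hc, h2⟩)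
    rw [hs] at this
    exact this.symm
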